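/- With Q the magic-basis change matrix, for all real a₇,a₈,a₉ the matrix Q⁻¹ exp(a₇X₇+a₈X₈+a₉X₉) Q is diagonal, where X₇=(i/2)σ₁⊗σ₁, X₈=(i/2)σ₂⊗σ₂, X₉=(i/2)σ₃⊗σ₃. -/

import Mathlib

set_option maxHeartbeats 1000000


open Matrix Kronecker Complex

noncomputable def sigma0 : Matrix (Fin 2) (Fin 2) ℂ := 1
noncomputable def sigma1 : Matrix (Fin 2) (Fin 2) ℂ := !![0, 1; 1, 0]
noncomputable def sigma2 : Matrix (Fin 2) (Fin 2) ℂ := !![0, -I; I, 0]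
noncomputable def sigma3 : Matrix (Fin 2) (Fin 2) ℂ := !![1, 0; 0, -1]

/-- Reindexing of a two-qubit matrix (indexed by `Fin 2 × Fin 2`) as a `4 × 4` matrix. -/
noncomputable def toF4 (M : Matrix (Fin 2 × Fin 2) (Fin 2 × Fin 2) ℂ) :
    Matrix (Fin 4) (Fin 4) ℂ :=
  Matrix.reindex finProdFinEquiv finProdFinEquiv M

/-- The magic-basis change matrix. -/
noncomputable def Qmagic : Matrix (Fin 4) (Fin 4) ℂ :=
  (((Real.sqrt 2)⁻¹ : ℝ) : ℂ) •
    !![1, 0, 0, I; 0, I, 1, 0; 0, I, -1, 0; 1, 0, 0, -I]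

noncomputable def X7 : Matrix (Fin 2 × Fin 2) (Fin 2 × Fin 2) ℂ := (I / 2) • (sigma1 ⊗ₖ sigma1)
noncomputable def X8 : Matrix (Fin 2 × Fin 2) (Fin 2 × Fin 2) ℂ := (I / 2) • (sigma2 ⊗ₖ sigma2)
noncomputable def X9 : Matrix (Fin 2 × Fin 2) (Fin 2 × Fin 2) ℂ := (I / 2) • (sigma3 ⊗ₖ sigma3)

noncomputable def Amat : Matrix (Fin 4) (Fin 4) ℂ :=
  !![1, 0, 0, I; 0, I, 1, 0; 0, I, -1, 0; 1, 0, 0, -I]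

noncomputable def Bmat : Matrix (Fin 4) (Fin 4) ℂ :=
  !![1, 0, 0, 1; 0, -I, -I, 0; 0, 1, -1, 0; -I, 0, 0, I]

lemma hc : (((Real.sqrt 2)⁻¹ : ℝ) : ℂ) * (((Real.sqrt 2)⁻¹ : ℝ) : ℂ) = 1/2 := by
  rw [← Complex.ofReal_mul, ← mul_inv, Real.mul_self_sqrt (by norm_num)]
  norm_num

lemma hAB : Amat * Bmat = (2 : ℂ) • 1 := by
  ext i j
  fin_cases i <;> fin_cases j <;>
    simp [Amat, Bmat, Matrix.mul_apply, Fin.sum_univ_four, Matrix.one_apply] <;> ring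

lemma hQright : Qmagic * ((((Real.sqrt 2)⁻¹ : ℝ) : ℂ) • Bmat) = 1 := by
  rw [Qmagic, show (!![1, 0, 0, I; 0, I, 1, 0; 0, I, -1, 0; 1, 0, 0, -I] :
        Matrix (Fin 4) (Fin 4) ℂ) = Amat from rfl,
    smul_mul_assoc, mul_smul_comm, hAB, smul_smul, hc, smul_smul]
  norm_num

lemma hQinv : Qmagic⁻¹ = (((Real.sqrt 2)⁻¹ : ℝ) : ℂ) • Bmat :=
  Matrix.inv_eq_right_inv hQright

lemma hN (a7 a8 a9 : ℝ) : toF4 (a7 • X7 + a8 • X8 + a9 • X9) =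
    !![I/2*a9, 0, 0, I/2*(a7-a8);
       0, -(I/2)*a9, I/2*(a7+a8), 0;
       0, I/2*(a7+a8), -(I/2)*a9, 0;
       I/2*(a7-a8), 0, 0, I/2*a9] := by
  ext i j
  fin_cases i <;> fin_cases j <;>
    norm_num [toF4, X7, X8, X9, sigma1, sigma2, sigma3, finProdFinEquiv,
      Fin.divNat, Fin.modNat, Matrix.vecHead, Matrix.vecTail,
      show ((3:Fin 4):ℕ) = 3 from rfl, show ((2:Fin 4):ℕ) = 2 from rfl] <;> ring

/-- Elements of `A = exp 𝔞` are diagonal in the magic basis. -/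
theorem stmt11 (a7 a8 a9 : ℝ) :
    (Qmagic⁻¹ * NormedSpace.exp (toF4 (a7 • X7 + a8 • X8 + a9 • X9)) * Qmagic).IsDiag := by
  have hU : IsUnit Qmagic := (Matrix.isUnit_iff_isUnit_det _).mpr
    (Matrix.isUnit_det_of_right_inverse hQright)
  rw [← Matrix.exp_conj' Qmagic _ hU]
  have hdiag : Qmagic⁻¹ * toF4 (a7 • X7 + a8 • X8 + a9 • X9) * Qmagic =
      Matrix.diagonal ![I/2*((a7:ℂ)-a8+a9), I/2*(a7+a8-a9),
        -(I/2)*(a7+a8+a9), I/2*(-a7+a8+a9)] := by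
    rw [hQinv, hN, Qmagic, show (!![1, 0, 0, I; 0, I, 1, 0; 0, I, -1, 0; 1, 0, 0, -I] :
          Matrix (Fin 4) (Fin 4) ℂ) = Amat from rfl]
    rw [smul_mul_assoc, smul_mul_assoc, mul_smul_comm, smul_smul, hc]
    ext i j
    fin_cases i <;> fin_cases j <;>
      simp only [Matrix.smul_apply, Matrix.mul_apply, Fin.sum_univ_four, Amat, Bmat,
        Matrix.diagonal, Matrix.of_apply, Matrix.cons_val', Matrix.cons_val_zero,
        Matrix.cons_val_one, Matrix.head_cons, Matrix.empty_val',
        Matrix.cons_val_fin_one, Matrix.head_fin_const, smul_eq_mul, Matrix.cons_val]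
    all_goals norm_num [Fin.ext_iff]
    all_goals try ring
    all_goals (rw [show (I:ℂ)^3 = -I from by simp [pow_succ]]; ring)
  rw [hdiag, Matrix.exp_diagonal]
  exact Matrix.isDiag_diagonal _
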